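/- arXiv:2505.04983 — 3 statements merged into one kernel-verified Lean document; each statement's English description precedes it below -/
import Mathlib

section
/- Let U be a real random variable with continuous strictly positive density, and let g₀, g₁ : ℝ → ℝ be strictly increasing continuous functions (representing M_{x'} = g₀(U) and M_{x'''} = g₁(U)). Let F₀(m) = P(g₀(U) ≤ m) and F₁ its analogue for g₁, with F₁⁻¹ the inverse of F₁. Then for every m in the range of g₀, conditionally on g₀(U) = m the variable g₁(U) is almost surely equal to the constant F₁⁻¹(F₀(m)); equivalently, g₁(U) = F₁⁻¹(F₀(g₀(U))) almost surely. -/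
open MeasureTheory ProbabilityTheory

/-- Lemma 4.1: under strict monotonicity, conditionally on `g₀(U)` the variable `g₁(U)`
is the deterministic quantile transport `F₁⁻¹(F₀(g₀(U)))`. -/
theorem stmt3 {Ω : Type*} [MeasurableSpace Ω] (μ : Measure Ω) [IsProbabilityMeasure μ]
    (U : Ω → ℝ) (hU : Measurable U)
    (hcdf_mono : StrictMono fun t : ℝ => (μ {ω | U ω ≤ t}).toReal)
    (hcdf_cont : Continuous fun t : ℝ => (μ {ω | U ω ≤ t}).toReal)
    (g₀ g₁ : ℝ → ℝ) (hg₀ : StrictMono g₀) (hg₀c : Continuous g₀)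
    (hg₁ : StrictMono g₁) (hg₁c : Continuous g₁)
    (F₀ F₁ Finv : ℝ → ℝ)
    (hF₀ : ∀ m, F₀ m = (μ {ω | g₀ (U ω) ≤ m}).toReal)
    (hF₁ : ∀ m, F₁ m = (μ {ω | g₁ (U ω) ≤ m}).toReal)
    (hFinv : ∀ m, Finv (F₁ m) = m) :
    ∀ᵐ ω ∂μ, g₁ (U ω) = Finv (F₀ (g₀ (U ω))) := by
  refine Filter.Eventually.of_forall fun ω => ?_
  have h : F₀ (g₀ (U ω)) = F₁ (g₁ (U ω)) := by
    rw [hF₀, hF₁]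
    congr 1
    congr 1
    ext ω'
    simp [hg₀.le_iff_le, hg₁.le_iff_le]
  rw [h, hFinv]
end

section
/- Let T be a real random variable with continuous CDF F_T, and a, b, c, d, e, f ∈ ℝ with F_T(e) < F_T(f). Then P(T ≥ c, T < a, T < b, T ≥ d | e ≤ T < f) = max(min(F_T(a), F_T(b), F_T(f)) − max(F_T(c), F_T(d), F_T(e)), 0) / (F_T(f) − F_T(e)). (Identification formula for PNS^{X→N→Y}, case 1A of Theorem 4.2.) -/
open MeasureTheory ProbabilityTheory

lemma aux_mono {Ω : Type*} [MeasurableSpace Ω] (μ : Measure Ω) [IsProbabilityMeasure μ]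
    (T : Ω → ℝ) (F : ℝ → ℝ) (hF : ∀ t, F t = (μ {ω | T ω ≤ t}).toReal) :
    Monotone F := by
  intro s t hst
  rw [hF, hF]
  exact ENNReal.toReal_mono (measure_ne_top μ _)
    (measure_mono (fun ω hω => le_trans hω hst))

lemma aux_lt {Ω : Type*} [MeasurableSpace Ω] (μ : Measure Ω) [IsProbabilityMeasure μ]
    (T : Ω → ℝ) (F : ℝ → ℝ) (hF : ∀ t, F t = (μ {ω | T ω ≤ t}).toReal)
    (hFc : Continuous F) (t : ℝ) :
    (μ {ω | T ω < t}).toReal = F t := by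
  set s : ℕ → Set Ω := fun n => {ω | T ω ≤ t - 1 / (n + 1)} with hs
  have hmono : Monotone s := by
    intro m n hmn ω hω
    simp only [hs, Set.mem_setOf_eq] at hω ⊢
    refine le_trans hω ?_
    have : (1 : ℝ) / (n + 1) ≤ 1 / (m + 1) := by
      have hc : (m : ℝ) ≤ n := Nat.cast_le.2 hmn
      rw [div_le_div_iff₀ (by positivity) (by positivity)]
      linarith
    linarith
  have hU : {ω | T ω < t} = ⋃ n, s n := by
    ext ω
    simp only [Set.mem_iUnion, Set.mem_setOf_eq, hs]
    constructor
    · intro h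
      obtain ⟨n, hn⟩ := exists_nat_one_div_lt (sub_pos.2 h)
      exact ⟨n, by push_cast at hn ⊢; linarith⟩
    · rintro ⟨n, hn⟩
      have : (0 : ℝ) < 1 / (n + 1) := by positivity
      linarith
  have hten : Filter.Tendsto (fun n => μ (s n)) Filter.atTop (nhds (μ (⋃ n, s n))) :=
    tendsto_measure_iUnion_atTop hmono
  have hten2 : Filter.Tendsto (fun n => (μ (s n)).toReal) Filter.atTop
      (nhds (μ (⋃ n, s n)).toReal) :=
    (ENNReal.tendsto_toReal (measure_ne_top μ _)).comp hten 
  have heq : ∀ n, (μ (s n)).toReal = F (t - 1 / (n + 1)) := fun n => (hF _).symm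
  have hten3 : Filter.Tendsto (fun n : ℕ => F (t - 1 / (n + 1))) Filter.atTop (nhds (F t)) := by
    have h1 : Filter.Tendsto (fun n : ℕ => t - 1 / (n + 1 : ℝ)) Filter.atTop (nhds t) := by
      have := tendsto_one_div_add_atTop_nhds_zero_nat (𝕜 := ℝ)
      have := Filter.Tendsto.const_sub t this
      simpa using this
    exact (hFc.tendsto t).comp h1
  rw [hU]
  refine tendsto_nhds_unique ?_ hten3
  simpa only [heq] using hten2

lemma aux_Ico {Ω : Type*} [MeasurableSpace Ω] (μ : Measure Ω) [IsProbabilityMeasure μ]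
    (T : Ω → ℝ) (hT : Measurable T) (F : ℝ → ℝ)
    (hF : ∀ t, F t = (μ {ω | T ω ≤ t}).toReal) (hFc : Continuous F) (s t : ℝ) :
    (μ {ω | s ≤ T ω ∧ T ω < t}).toReal = max (F t - F s) 0 := by
  by_cases h : t ≤ s
  · have hempty : {ω | s ≤ T ω ∧ T ω < t} = ∅ := by
      ext ω; simp only [Set.mem_setOf_eq, Set.mem_empty_iff_false, iff_false]
      rintro ⟨h1, h2⟩; linarith
    have : F t ≤ F s := aux_mono μ T F hF h
    rw [hempty]
    simp [max_eq_right (by linarith : F t - F s ≤ 0)]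
  · push_neg at h
    have hdiff : {ω | s ≤ T ω ∧ T ω < t} = {ω | T ω < t} \ {ω | T ω < s} := by
      ext ω
      simp only [Set.mem_setOf_eq, Set.mem_diff, not_lt]
      tauto
    have hsub : {ω | T ω < s} ⊆ {ω | T ω < t} := fun ω hω => lt_trans hω h
    have hmd : μ ({ω | T ω < t} \ {ω | T ω < s})
        = μ {ω | T ω < t} - μ {ω | T ω < s} :=
      measure_diff hsub ((hT measurableSet_Iio).nullMeasurableSet) (measure_ne_top μ _)
    rw [hdiff, hmd, ENNReal.toReal_sub_of_le (measure_mono hsub) (measure_ne_top μ _),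
      aux_lt μ T F hF hFc, aux_lt μ T F hF hFc]
    have : F s ≤ F t := aux_mono μ T F hF h.le
    rw [max_eq_left (by linarith)]

/-- Identification formula for `PNS^{X→N→Y}` (case 1A of Theorem 4.2):
`P(T≥c, T<a, T<b, T≥d | e ≤ T < f)
  = max(min(F a, F b, F f) − max(F c, F d, F e), 0) / (F f − F e)`. -/
theorem stmt6 {Ω : Type*} [MeasurableSpace Ω] (μ : Measure Ω) [IsProbabilityMeasure μ]
    (T : Ω → ℝ) (hT : Measurable T) (F : ℝ → ℝ)
    (hF : ∀ t, F t = (μ {ω | T ω ≤ t}).toReal) (hFc : Continuous F)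
    (a b c d e f : ℝ) (hef : F e < F f) :
    ((μ[|{ω | e ≤ T ω ∧ T ω < f}]) {ω | c ≤ T ω ∧ T ω < a ∧ T ω < b ∧ d ≤ T ω}).toReal
      = max (min (min (F a) (F b)) (F f) - max (max (F c) (F d)) (F e)) 0
          / (F f - F e) := by
  have hmono := aux_mono μ T F hF
  have hB : MeasurableSet {ω | e ≤ T ω ∧ T ω < f} := by
    have : {ω | e ≤ T ω ∧ T ω < f} = T ⁻¹' (Set.Ico e f) := rfl
    rw [this]; exact hT measurableSet_Ico
  have hBval : (μ {ω | e ≤ T ω ∧ T ω < f}).toReal = F f - F e := by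
    rw [aux_Ico μ T hT F hF hFc, max_eq_left (by linarith)]
  have hBne : μ {ω | e ≤ T ω ∧ T ω < f} ≠ 0 := by
    intro h0
    rw [h0] at hBval
    simp at hBval
    linarith
  have hinter : {ω | e ≤ T ω ∧ T ω < f} ∩ {ω | c ≤ T ω ∧ T ω < a ∧ T ω < b ∧ d ≤ T ω}
      = {ω | max (max c d) e ≤ T ω ∧ T ω < min (min a b) f} := by
    ext ω
    simp only [Set.mem_inter_iff, Set.mem_setOf_eq, max_le_iff, lt_min_iff]
    tauto
  rw [ProbabilityTheory.cond_apply hB, hinter, ENNReal.toReal_mul, ENNReal.toReal_inv,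
    hBval, aux_Ico μ T hT F hF hFc, hmono.map_min, hmono.map_min, hmono.map_max, hmono.map_max]
  rw [inv_mul_eq_div]
end

section
/- Let T be a real random variable with continuous CDF F_T and let a, b, c, d, e, f ∈ ℝ with F_T(e) < F_T(f). Define γ¹ = min(F_T(a), F_T(b), F_T(c), F_T(f)) − max(F_T(d), F_T(e)), γ² = min(F_T(a), F_T(b), F_T(f)) − max(F_T(d), F_T(e), F_T(c)), γ³ and γ⁴ analogously for the other two components, and δ = F_T(f) − F_T(e). Then max(γ¹, 0) + max(γ², 0) + max(γ³, 0) + max(γ⁴, 0) need not be computed separately: in the comonotone representation, the four identified path-specific PNS quantities sum to max(min(F_T(a), F_T(f)) − max(F_T(d), F_T(e)), 0)/δ, which equals the identified total PNS P(T ≥ d, T < a | e ≤ T < f). (Consistency of the identification formulas with the decomposition of Proposition 3.1.) -/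
open MeasureTheory ProbabilityTheory Set

private lemma key13 (p q x : ℝ) :
    max (min p x - q) 0 + max (p - max q x) 0 = max (p - q) 0 := by
  rcases le_total p x with h | h <;> rcases le_total q x with h' | h' <;>
    simp only [min_def, max_def] <;> split_ifs <;> linarith

private lemma keysum13 (A B C B' D E Ff : ℝ) :
    max (min (min (min A B) C) Ff - max D E) 0
      + max (min (min A B) Ff - max (max D E) C) 0
      + max (min (min A Ff) B' - max (max D E) B) 0
      + max (min A Ff - max (max (max D B) E) B') 0
    = max (min A Ff - max D E) 0 := by
  have k1 := key13 (min (min A Ff) B) (max D E) C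
  have k2 := key13 (min A Ff) (max (max D E) B) B'
  have k3 := key13 (min A Ff) (max D E) B
  have e1 : min (min (min A B) C) Ff = min (min (min A Ff) B) C := by ac_rfl
  have e2 : min (min A B) Ff = min (min A Ff) B := by ac_rfl
  have e3 : max (max (max D B) E) B' = max (max (max D E) B) B' := by ac_rfl
  rw [e1, e2, e3]
  linarith

/-- Consistency of the identification formulas with the decomposition of Proposition 3.1:
the four identified path-specific PNS quantities sum to the identified total PNS. -/
theorem stmt13 {Ω : Type*} [MeasurableSpace Ω] (μ : Measure Ω) [IsProbabilityMeasure μ]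
    (T : Ω → ℝ) (hT : Measurable T) (F : ℝ → ℝ)
    (hF : ∀ t, F t = (μ {ω | T ω ≤ t}).toReal) (hFc : Continuous F)
    (a b c b' d e f : ℝ) (hef : F e < F f) :
    (max (min (min (min (F a) (F b)) (F c)) (F f) - max (F d) (F e)) 0
      + max (min (min (F a) (F b)) (F f) - max (max (F d) (F e)) (F c)) 0
      + max (min (min (F a) (F f)) (F b') - max (max (F d) (F e)) (F b)) 0
      + max (min (F a) (F f) - max (max (max (F d) (F b)) (F e)) (F b')) 0)
        / (F f - F e)
      = max (min (F a) (F f) - max (F d) (F e)) 0 / (F f - F e)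
    ∧ max (min (F a) (F f) - max (F d) (F e)) 0 / (F f - F e)
      = ((μ[|{ω | e ≤ T ω ∧ T ω < f}]) {ω | d ≤ T ω ∧ T ω < a}).toReal := by
  constructor
  · rw [keysum13 (F a) (F b) (F c) (F b') (F d) (F e) (F f)]
  · -- set up the pushforward measure
    set ν : Measure ℝ := μ.map T with hν
    haveI : IsProbabilityMeasure ν := Measure.isProbabilityMeasure_map hT.aemeasurable
    have hFν : ∀ t, F t = (ν (Iic t)).toReal := by
      intro t
      rw [hF, hν, Measure.map_apply hT measurableSet_Iic]
      rfl
    have hmono : Monotone F := by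
      intro x y hxy
      rw [hFν, hFν]
      exact ENNReal.toReal_mono (measure_ne_top _ _)
        (measure_mono (Iic_subset_Iic.2 hxy))
    have hIoc : ∀ s t : ℝ, s ≤ t → (ν (Ioc s t)).toReal = F t - F s := by
      intro s t hst
      rw [hFν, hFν, ← ENNReal.toReal_sub_of_le
        (measure_mono (Iic_subset_Iic.2 hst)) (measure_ne_top _ _)]
      congr 1
      rw [← Iic_sdiff_Iic,
        measure_diff (Iic_subset_Iic.2 hst) measurableSet_Iic.nullMeasurableSet
          (measure_ne_top _ _)]
    have hatom : ∀ t : ℝ, ν {t} = 0 := by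
      intro t
      have hle : ∀ ε > (0 : ℝ), (ν {t}).toReal ≤ 0 + ε := by
        intro ε hε
        obtain ⟨δ, hδ, hb⟩ := Metric.continuous_iff.mp hFc t ε hε
        have hst : t - δ / 2 < t := by linarith
        have h1 : (ν {t}).toReal ≤ (ν (Ioc (t - δ / 2) t)).toReal := by
          refine ENNReal.toReal_mono (measure_ne_top _ _) (measure_mono ?_)
          intro x hx
          simp only [mem_singleton_iff] at hx
          subst hx
          exact ⟨by linarith, le_refl _⟩
        have h2 : dist (t - δ / 2) t < δ := by
          rw [Real.dist_eq, abs_of_nonpos (by linarith)]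
          linarith
        have h3 := hb _ h2
        rw [Real.dist_eq, abs_of_nonpos (by linarith [hmono hst.le])] at h3
        rw [hIoc _ _ hst.le] at h1
        linarith
      have h0 : (ν {t}).toReal ≤ 0 := le_of_forall_pos_le_add hle
      have h0' : (ν {t}).toReal = 0 := le_antisymm h0 ENNReal.toReal_nonneg
      exact (ENNReal.toReal_eq_zero_iff _).mp h0' |>.resolve_right (measure_ne_top _ _)
    have hIcoIoc : ∀ x y : ℝ, ν (Ico x y) = ν (Ioc x y) := by
      intro x y
      apply le_antisymm
      · calc ν (Ico x y) ≤ ν (Ioc x y ∪ {x}) := by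
              refine measure_mono ?_
              intro z hz
              rcases eq_or_lt_of_le hz.1 with h | h
              · exact Or.inr (by simp [h.symm])
              · exact Or.inl ⟨h, hz.2.le⟩
          _ ≤ ν (Ioc x y) + ν {x} := measure_union_le _ _
          _ = ν (Ioc x y) := by rw [hatom, add_zero]
      · calc ν (Ioc x y) ≤ ν (Ico x y ∪ {y}) := by
              refine measure_mono ?_
              intro z hz
              rcases eq_or_lt_of_le hz.2 with h | h
              · exact Or.inr (by simp [h])
              · exact Or.inl ⟨hz.1.le, h⟩
          _ ≤ ν (Ico x y) + ν {y} := measure_union_le _ _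
          _ = ν (Ico x y) := by rw [hatom, add_zero]
    have hIco : ∀ x y : ℝ, (ν (Ico x y)).toReal = max (F y - F x) 0 := by
      intro x y
      rcases le_or_gt y x with h | h
      · rw [Ico_eq_empty (not_lt.mpr h), measure_empty, ENNReal.toReal_zero,
          max_eq_right (by linarith [hmono h])]
      · rw [hIcoIoc, hIoc _ _ h.le, max_eq_left (by linarith [hmono h.le])]
    -- rewrite the sets as preimages
    have hsets : {ω | e ≤ T ω ∧ T ω < f} = T ⁻¹' Ico e f := rfl
    have hsett : {ω | d ≤ T ω ∧ T ω < a} = T ⁻¹' Ico d a := rfl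
    rw [hsets, hsett, cond_apply (hT measurableSet_Ico) μ]
    have hinter : T ⁻¹' Ico e f ∩ T ⁻¹' Ico d a = T ⁻¹' Ico (e ⊔ d) (f ⊓ a) := by
      rw [← preimage_inter, Ico_inter_Ico]
    rw [hinter, ← Measure.map_apply hT measurableSet_Ico,
      ← Measure.map_apply hT measurableSet_Ico, ← hν]
    have hδ : (ν (Ico e f)).toReal = F f - F e := by
      rw [hIco, max_eq_left (by linarith)]
    have hs0 : ν (Ico e f) ≠ 0 := by
      intro h
      rw [h, ENNReal.toReal_zero] at hδ
      linarith
    rw [ENNReal.toReal_mul, ENNReal.toReal_inv, hδ, hIco]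
    rw [hmono.map_min, hmono.map_max, min_comm (F f) (F a), max_comm (F e) (F d),
      div_eq_inv_mul]
end
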